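/- Let s > 1 and γ > 0 be reals, let p be a natural number with p(s+1) ≤ γ < (p+1)(s+1), and set s̃ = min{s, 2}. If either (i) 1 < s ≤ 2 and p(s+1) + 1 < γ < p(s+1) + 2s − 1, or (ii) s > 2 and p(s+1) + 1 < γ < (p+1)(s+1), then min{γ − p, (γ − p + p·s̃ + 1)/2, s̃·(p+1)} < min{γ − p, s·(p+1)}. That is, on these ranges of γ the optimally tuned KRR convergence-rate exponent is strictly smaller than the minimax (kernel gradient flow) exponent — the saturation effect of KRR in large dimensions. -/
import Mathlib


/-- Saturation effect of KRR in large dimensions: for (i) `1 < s ≤ 2` and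
`γ ∈ (p(s+1)+1, p(s+1)+2s−1)`, or (ii) `s > 2` and `γ ∈ (p(s+1)+1, (p+1)(s+1))`,
the optimally tuned KRR convergence-rate exponent
`min{γ−p, (γ−p+p·s̃+1)/2, s̃(p+1)}` (with `s̃ = min{s,2}`) is strictly smaller than the
minimax exponent `min{γ−p, s(p+1)}` achieved by kernel gradient flow. -/
theorem krr_saturation_effect
    (s γ : ℝ) (hs : 1 < s) (hγ : 0 < γ) (p : ℕ)
    (hp1 : (p : ℝ) * (s + 1) ≤ γ) (hp2 : γ < ((p : ℝ) + 1) * (s + 1))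
    (st : ℝ) (hst : st = min s 2)
    (h : (s ≤ 2 ∧ (p : ℝ) * (s + 1) + 1 < γ ∧ γ < (p : ℝ) * (s + 1) + 2 * s - 1) ∨
         (2 < s ∧ (p : ℝ) * (s + 1) + 1 < γ)) :
    min (γ - (p : ℝ)) (min ((γ - (p : ℝ) + (p : ℝ) * st + 1) / 2) (st * ((p : ℝ) + 1)))
      < min (γ - (p : ℝ)) (s * ((p : ℝ) + 1)) := by
  obtain ⟨h1, h2, h3⟩ | ⟨h1, h2⟩ := h
  · have hst' : st = s := by rw [hst, min_eq_left h1]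
    rw [hst']
    have hB : (γ - (p:ℝ) + (p:ℝ) * s + 1) / 2 < γ - (p:ℝ) := by nlinarith
    have hD : (γ - (p:ℝ) + (p:ℝ) * s + 1) / 2 < s * ((p:ℝ) + 1) := by nlinarith
    calc min (γ - (p:ℝ)) (min ((γ - (p:ℝ) + (p:ℝ) * s + 1) / 2) (s * ((p:ℝ) + 1)))
        ≤ (γ - (p:ℝ) + (p:ℝ) * s + 1) / 2 := le_trans (min_le_right _ _) (min_le_left _ _)
      _ < min (γ - (p:ℝ)) (s * ((p:ℝ) + 1)) := lt_min hB hD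
  · have hst' : st = 2 := by rw [hst, min_eq_right h1.le]
    rw [hst']
    have hp0 : (0:ℝ) ≤ (p:ℝ) := Nat.cast_nonneg p
    by_cases hc : (γ - (p:ℝ) + (p:ℝ) * 2 + 1) / 2 ≤ 2 * ((p:ℝ) + 1)
    · have hB : (γ - (p:ℝ) + (p:ℝ) * 2 + 1) / 2 < γ - (p:ℝ) := by nlinarith [mul_nonneg hp0 (by linarith : (0:ℝ) ≤ s - 2)]
      have hD : (γ - (p:ℝ) + (p:ℝ) * 2 + 1) / 2 < s * ((p:ℝ) + 1) := by nlinarith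
      calc min (γ - (p:ℝ)) (min ((γ - (p:ℝ) + (p:ℝ) * 2 + 1) / 2) (2 * ((p:ℝ) + 1)))
          ≤ (γ - (p:ℝ) + (p:ℝ) * 2 + 1) / 2 := le_trans (min_le_right _ _) (min_le_left _ _)
        _ < min (γ - (p:ℝ)) (s * ((p:ℝ) + 1)) := lt_min hB hD
    · push_neg at hc
      have hB : 2 * ((p:ℝ) + 1) < γ - (p:ℝ) := by nlinarith
      have hD : 2 * ((p:ℝ) + 1) < s * ((p:ℝ) + 1) := by nlinarith
      calc min (γ - (p:ℝ)) (min ((γ - (p:ℝ) + (p:ℝ) * 2 + 1) / 2) (2 * ((p:ℝ) + 1)))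
          ≤ 2 * ((p:ℝ) + 1) := le_trans (min_le_right _ _) (min_le_right _ _)
        _ < min (γ - (p:ℝ)) (s * ((p:ℝ) + 1)) := lt_min hB hD
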